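/- If f : J → ℝ is bounded on compact subintervals and has a right-hand limit at every point of J (or a left-hand limit at every point of J), then f is Riemann (Darboux) integrable on every compact subinterval of J. -/

import Mathlib

open Set Filter Topology

noncomputable section

/-- The set of lower Darboux sums of `f` over `[a,b]`: sums `∑ pᵢ (xᵢ₊₁ - xᵢ)` over
partitions `a = x₀ ≤ x₁ ≤ … ≤ xₙ = b` where each `pᵢ` is a lower bound of `f` on
`[xᵢ, xᵢ₊₁]`. -/
def lowerSums (f : ℝ → ℝ) (a b : ℝ) : Set ℝ :=
  {s | ∃ n : ℕ, ∃ x : ℕ → ℝ, ∃ p : ℕ → ℝ,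
    x 0 = a ∧ x n = b ∧ (∀ i < n, x i ≤ x (i + 1)) ∧
    (∀ i < n, ∀ t ∈ Set.Icc (x i) (x (i + 1)), p i ≤ f t) ∧
    s = ∑ i ∈ Finset.range n, p i * (x (i + 1) - x i)}

/-- The set of upper Darboux sums of `f` over `[a,b]`. -/
def upperSums (f : ℝ → ℝ) (a b : ℝ) : Set ℝ :=
  {s | ∃ n : ℕ, ∃ x : ℕ → ℝ, ∃ q : ℕ → ℝ,
    x 0 = a ∧ x n = b ∧ (∀ i < n, x i ≤ x (i + 1)) ∧
    (∀ i < n, ∀ t ∈ Set.Icc (x i) (x (i + 1)), f t ≤ q i) ∧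
    s = ∑ i ∈ Finset.range n, q i * (x (i + 1) - x i)}

/-- The lower Darboux integral of `f` over `[a,b]`. -/
def lowerDarboux (f : ℝ → ℝ) (a b : ℝ) : ℝ := sSup (lowerSums f a b)

/-- The upper Darboux integral of `f` over `[a,b]`. -/
def upperDarboux (f : ℝ → ℝ) (a b : ℝ) : ℝ := sInf (upperSums f a b)

/-- `f` is bounded on every compact subinterval of `J`. -/
def BoundedOnCompacts (J : Set ℝ) (f : ℝ → ℝ) : Prop :=
  ∀ a ∈ J, ∀ b ∈ J, ∃ p q : ℝ, ∀ t ∈ Set.Icc a b, p ≤ f t ∧ f t ≤ q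

/-- `F` is a pre-primitive of `f` on `J`: every difference quotient lies between
every lower bound and every upper bound of `f` on the interval with the given
endpoints. -/
def PrePrimitive (J : Set ℝ) (f F : ℝ → ℝ) : Prop :=
  ∀ x ∈ J, ∀ y ∈ J, x ≠ y → ∀ p q : ℝ,
    (∀ t ∈ Set.uIcc x y, p ≤ f t ∧ f t ≤ q) →
    p ≤ (F y - F x) / (y - x) ∧ (F y - F x) / (y - x) ≤ q

/-- `f` is Darboux (Riemann) integrable on every compact subinterval of `J`. -/
def DarbouxIntegrableOnCompacts (J : Set ℝ) (f : ℝ → ℝ) : Prop :=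
  ∀ a ∈ J, ∀ b ∈ J, a < b → lowerDarboux f a b = upperDarboux f a b

open MeasureTheory

lemma xmono {n : ℕ} {x : ℕ → ℝ} (h : ∀ i < n, x i ≤ x (i + 1)) :
    ∀ i j, i ≤ j → j ≤ n → x i ≤ x j := by
  intro i j hij hjn
  induction j with
  | zero =>
    obtain rfl : i = 0 := Nat.le_zero.mp hij
    exact le_refl _
  | succ k ih =>
    rcases Nat.eq_or_lt_of_le hij with h1 | h1
    · rw [h1]
    · exact le_trans (ih (by omega) (by omega)) (h k (by omega))

lemma step_eval {n : ℕ} {x p : ℕ → ℝ} (hmono : ∀ i < n, x i ≤ x (i + 1))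
    {t : ℝ} (ht0 : x 0 ≤ t) (htn : t < x n) :
    ∃ i < n, x i ≤ t ∧ t < x (i + 1) ∧
      (∑ j ∈ Finset.range n, Set.indicator (Set.Ico (x j) (x (j + 1))) (fun _ => p j) t) = p i := by
  have hn : 0 < n := by
    rcases Nat.eq_zero_or_pos n with h | h
    · subst h; exact absurd (lt_of_le_of_lt ht0 htn) (lt_irrefl _)
    · exact h
  classical
  set F := (Finset.range n).filter (fun i => x i ≤ t) with hF
  have hne : F.Nonempty := ⟨0, by simp [hF, hn, ht0]⟩
  set i := F.max' hne with hi
  have hiF : i ∈ F := F.max'_mem hne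
  have hin : i < n := Finset.mem_range.mp (Finset.mem_filter.mp hiF).1
  have hxi : x i ≤ t := (Finset.mem_filter.mp hiF).2
  have hti : t < x (i + 1) := by
    rcases eq_or_lt_of_le (Nat.succ_le_of_lt hin) with he | hlt
    · rw [show i + 1 = n from he]; exact htn
    · by_contra hc
      push_neg at hc
      have : i + 1 ≤ i := Finset.le_max' F (i + 1) (Finset.mem_filter.mpr ⟨Finset.mem_range.mpr hlt, hc⟩)
      omega
  refine ⟨i, hin, hxi, hti, ?_⟩
  rw [Finset.sum_eq_single_of_mem i (Finset.mem_range.mpr hin)]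
  · rw [Set.indicator_of_mem (show t ∈ Set.Ico (x i) (x (i+1)) from ⟨hxi, hti⟩)]
  · intro j hj hjne
    apply Set.indicator_of_notMem
    intro hmem
    rcases lt_or_gt_of_ne hjne with h | h
    · have : x (j + 1) ≤ x i := xmono hmono (j + 1) i (by omega) hin.le
      exact absurd (lt_of_lt_of_le hmem.2 (le_trans this hxi)) (lt_irrefl t)
    · have : x (i + 1) ≤ x j := xmono hmono (i + 1) j (by omega) (Finset.mem_range.mp hj).le
      exact absurd (le_trans this hmem.1) (not_le.mpr hti)

lemma step_integrable {a b : ℝ} (n : ℕ) (x p : ℕ → ℝ) :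
    IntegrableOn (fun t => ∑ i ∈ Finset.range n,
      Set.indicator (Set.Ico (x i) (x (i + 1))) (fun _ => p i) t) (Set.Ico a b) := by
  apply MeasureTheory.integrable_finset_sum
  intro i _
  exact (integrableOn_const (by rw [Real.volume_Ico]; exact ENNReal.ofReal_ne_top)).indicator
    measurableSet_Ico

lemma step_integral (a b : ℝ) (n : ℕ) (x p : ℕ → ℝ)
    (hx0 : x 0 = a) (hxn : x n = b) (hmono : ∀ i < n, x i ≤ x (i + 1)) :
    ∫ t in Set.Ico a b,
      (∑ i ∈ Finset.range n, Set.indicator (Set.Ico (x i) (x (i + 1))) (fun _ => p i) t)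
      = ∑ i ∈ Finset.range n, p i * (x (i + 1) - x i) := by
  rw [integral_finset_sum _ (fun i _ => IntegrableOn.integrable ((integrableOn_const (by
      rw [Real.volume_Ico]; exact ENNReal.ofReal_ne_top)).indicator measurableSet_Ico))]
  apply Finset.sum_congr rfl
  intro i hi
  have hi' := Finset.mem_range.mp hi
  have hsub : Set.Ico (x i) (x (i + 1)) ⊆ Set.Ico a b := by
    intro t ht
    refine ⟨le_trans ?_ ht.1, lt_of_lt_of_le ht.2 ?_⟩
    · rw [← hx0]; exact xmono hmono 0 i (Nat.zero_le _) hi'.le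
    · rw [← hxn]; exact xmono hmono (i + 1) n hi' (le_refl n)
  rw [setIntegral_indicator measurableSet_Ico, Set.inter_eq_self_of_subset_right hsub,
      setIntegral_const, Real.volume_real_Ico_of_le (hmono i hi'), smul_eq_mul]
  ring

lemma lower_le_upper {f : ℝ → ℝ} {a b : ℝ} (_hab : a < b) {L U : ℝ}
    (hL : L ∈ lowerSums f a b) (hU : U ∈ upperSums f a b) : L ≤ U := by
  obtain ⟨n, x, p, hx0, hxn, hxm, hp, rfl⟩ := hL
  obtain ⟨m, y, q, hy0, hyn, hym, hq, rfl⟩ := hU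
  rw [← step_integral a b n x p hx0 hxn hxm, ← step_integral a b m y q hy0 hyn hym]
  apply setIntegral_mono_on (step_integrable n x p) (step_integrable m y q) measurableSet_Ico
  intro t ht
  obtain ⟨i, hin, hxi, hti, hgi⟩ := step_eval (p := p) hxm (hx0 ▸ ht.1) (hxn ▸ ht.2)
  obtain ⟨j, hjm, hyj, htj, hgj⟩ := step_eval (p := q) hym (hy0 ▸ ht.1) (hyn ▸ ht.2)
  rw [hgi, hgj]
  exact le_trans (hp i hin t ⟨hxi, hti.le⟩) (hq j hjm t ⟨hyj, htj.le⟩)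

/-- There is a partition of `[a,c]` with total oscillation sum at most `r`. -/
def Pt (f : ℝ → ℝ) (a c r : ℝ) : Prop :=
  ∃ n : ℕ, ∃ x p q : ℕ → ℝ,
    x 0 = a ∧ x n = c ∧ (∀ i < n, x i ≤ x (i + 1)) ∧
    (∀ i < n, ∀ t ∈ Set.Icc (x i) (x (i + 1)), p i ≤ f t ∧ f t ≤ q i) ∧
    ∑ i ∈ Finset.range n, (q i - p i) * (x (i + 1) - x i) ≤ r

lemma Pt_mono {f : ℝ → ℝ} {a c r r' : ℝ} (h : Pt f a c r) (hr : r ≤ r') : Pt f a c r' := by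
  obtain ⟨n, x, p, q, h1, h2, h3, h4, h5⟩ := h
  exact ⟨n, x, p, q, h1, h2, h3, h4, le_trans h5 hr⟩

lemma Pt_base (f : ℝ → ℝ) (a r : ℝ) (hr : 0 ≤ r) : Pt f a a r :=
  ⟨0, fun _ => a, fun _ => 0, fun _ => 0, rfl, rfl, by omega, by omega, by simpa using hr⟩

lemma Pt_append {f : ℝ → ℝ} {a c d r : ℝ} (h : Pt f a c r) (hcd : c ≤ d)
    {pl qu : ℝ} (hb : ∀ t ∈ Set.Icc c d, pl ≤ f t ∧ f t ≤ qu) :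
    Pt f a d (r + (qu - pl) * (d - c)) := by
  classical
  obtain ⟨n, x, p, q, hx0, hxn, hm, hpq, hs⟩ := h
  refine ⟨n + 1, (fun i => if i ≤ n then x i else d), (fun i => if i < n then p i else pl),
    (fun i => if i < n then q i else qu), by simp [hx0], by simp, ?_, ?_, ?_⟩
  · intro i hi
    dsimp only
    rcases Nat.lt_or_ge i n with h1 | h1
    · rw [if_pos (Nat.le_of_lt h1), if_pos (Nat.succ_le_of_lt h1)]
      exact hm i h1
    · have hieq : i = n := by omega
      rw [hieq, if_pos (le_refl n), if_neg (by omega : ¬ n + 1 ≤ n), hxn]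
      exact hcd
  · intro i hi t ht
    dsimp only at ht ⊢
    rcases Nat.lt_or_ge i n with h1 | h1
    · rw [if_pos (Nat.le_of_lt h1), if_pos (Nat.succ_le_of_lt h1)] at ht
      rw [if_pos h1, if_pos h1]
      exact hpq i h1 t ht
    · have hieq : i = n := by omega
      rw [hieq, if_pos (le_refl n), if_neg (by omega : ¬ n + 1 ≤ n), hxn] at ht
      rw [hieq, if_neg (lt_irrefl n), if_neg (lt_irrefl n)]
      exact hb t ht
  · rw [Finset.sum_range_succ]
    have heq : ∀ i ∈ Finset.range n,
        ((if i < n then q i else qu) - (if i < n then p i else pl)) *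
          ((if i + 1 ≤ n then x (i + 1) else d) - (if i ≤ n then x i else d))
        = (q i - p i) * (x (i + 1) - x i) := by
      intro i hi
      have h1 := Finset.mem_range.mp hi
      rw [if_pos h1, if_pos h1, if_pos (Nat.succ_le_of_lt h1), if_pos (Nat.le_of_lt h1)]
    rw [Finset.sum_congr rfl heq]
    have hlast : ((if n < n then q n else qu) - (if n < n then p n else pl)) *
        ((if n + 1 ≤ n then x (n + 1) else d) - (if n ≤ n then x n else d))
        = (qu - pl) * (d - c) := by
      rw [if_neg (lt_irrefl n), if_neg (lt_irrefl n), if_neg (by omega : ¬ n + 1 ≤ n),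
        if_pos (le_refl n), hxn]
    rw [hlast]
    linarith

lemma key (J : Set ℝ) (hJ : J.OrdConnected) (f : ℝ → ℝ)
    (hbd : BoundedOnCompacts J f)
    (hlim : ∀ x ∈ J, (∃ y ∈ J, x < y) → ∃ L : ℝ, Tendsto f (𝓝[>] x) (𝓝 L)) :
    DarbouxIntegrableOnCompacts J f := by
  intro a ha b hb hab
  have hsubJ : Set.Icc a b ⊆ J := hJ.out ha hb
  obtain ⟨m, M, hmM⟩ := hbd a ha b hb
  have hC : 0 ≤ M - m := by
    have := hmM a (Set.left_mem_Icc.mpr hab.le)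
    linarith [this.1, this.2]
  have hkey : ∀ ε > 0, Pt f a b ε := by
    intro ε hε
    set ε' := ε / (2 * (b - a)) with hε'
    have hε'pos : 0 < ε' := div_pos hε (by linarith)
    set S := {c | c ∈ Set.Icc a b ∧ ∀ η > 0, Pt f a c (ε' * (c - a) + η)} with hSdef
    have haS : a ∈ S := by
      refine ⟨Set.left_mem_Icc.mpr hab.le, fun η hη => Pt_base f a _ ?_⟩
      nlinarith
    have hSne : S.Nonempty := ⟨a, haS⟩
    have hSbdd : BddAbove S := ⟨b, fun c hc => hc.1.2⟩
    set c0 := sSup S with hc0def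
    have hac0 : a ≤ c0 := le_csSup hSbdd haS
    have hc0b : c0 ≤ b := csSup_le hSne (fun c hc => hc.1.2)
    have hc0S : c0 ∈ S := by
      refine ⟨⟨hac0, hc0b⟩, ?_⟩
      intro η hη
      have hδpos : 0 < η / (2 * (M - m + 1)) := by positivity
      obtain ⟨c, hcS, hcgt⟩ := exists_lt_of_lt_csSup hSne
        (show c0 - η / (2 * (M - m + 1)) < c0 by linarith)
      obtain ⟨⟨hac, hcb⟩, hcP⟩ := hcS
      have hcc0 : c ≤ c0 := le_csSup hSbdd ⟨⟨hac, hcb⟩, hcP⟩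
      have h1 := hcP (η / 2) (by linarith)
      have h2 := Pt_append h1 hcc0 (pl := m) (qu := M)
        (fun t ht => hmM t ⟨le_trans hac ht.1, le_trans ht.2 hc0b⟩)
      apply Pt_mono h2
      have e1 : ε' * (c - a) ≤ ε' * (c0 - a) := by nlinarith
      have hne0 : M - m + 1 ≠ 0 := by linarith
      have e2 : (M - m) * (c0 - c) ≤ η / 2 := by
        have h0 : 0 ≤ c0 - c := by linarith
        have e21 : (M - m) * (c0 - c) ≤ (M - m + 1) * (c0 - c) := by nlinarith
        have e22 : (M - m + 1) * (c0 - c) ≤ (M - m + 1) * (η / (2 * (M - m + 1))) :=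
          mul_le_mul_of_nonneg_left (by linarith) (by linarith)
        have e23 : (M - m + 1) * (η / (2 * (M - m + 1))) = η / 2 := by
          field_simp
        linarith
      linarith
    have hc0eq : c0 = b := by
      by_contra hne
      have hc0lt : c0 < b := lt_of_le_of_ne hc0b hne
      obtain ⟨L, hL⟩ := hlim c0 (hsubJ ⟨hac0, hc0b⟩) ⟨b, hb, hc0lt⟩
      have hev : ∀ᶠ t in 𝓝[>] c0, dist (f t) L < ε' / 2 :=
        Metric.tendsto_nhds.mp hL (ε' / 2) (by positivity)
      obtain ⟨u, hu, hsubu⟩ := mem_nhdsGT_iff_exists_Ioo_subset.mp hev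
      rw [Set.mem_Ioi] at hu
      set d := min b ((c0 + u) / 2) with hddef
      have hc0d : c0 < d := lt_min hc0lt (by linarith)
      have hdb : d ≤ b := min_le_left _ _
      have hdu : d < u := lt_of_le_of_lt (min_le_right _ _) (by linarith)
      have hdS : d ∈ S := by
        refine ⟨⟨le_trans hac0 hc0d.le, hdb⟩, ?_⟩
        intro η hη
        have h1 := hc0S.2 (η / 2) (by linarith)
        set w := min d (c0 + η / (2 * (M - m + 1))) with hwdef
        have hc0w : c0 < w := lt_min hc0d (lt_add_of_pos_right _ (by positivity))
        have hwd : w ≤ d := min_le_left _ _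
        have h2 := Pt_append h1 hc0w.le (pl := m) (qu := M)
          (fun t ht => hmM t ⟨le_trans hac0 ht.1, le_trans ht.2 (le_trans hwd hdb)⟩)
        have hbw : ∀ t ∈ Set.Icc w d, L - ε' / 2 ≤ f t ∧ f t ≤ L + ε' / 2 := by
          intro t ht
          have htIoo : t ∈ Set.Ioo c0 u := ⟨lt_of_lt_of_le hc0w ht.1, lt_of_le_of_lt ht.2 hdu⟩
          have := hsubu htIoo
          rw [Set.mem_setOf_eq, Real.dist_eq, abs_lt] at this
          constructor <;> linarith [this.1, this.2]
        have h3 := Pt_append h2 hwd hbw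
        apply Pt_mono h3
        have hne0 : M - m + 1 ≠ 0 := by linarith
        have e2 : (M - m) * (w - c0) ≤ η / 2 := by
          have hwle : w - c0 ≤ η / (2 * (M - m + 1)) := by
            have := min_le_right d (c0 + η / (2 * (M - m + 1)))
            linarith [this]
          have h0 : 0 ≤ w - c0 := by linarith
          have e21 : (M - m) * (w - c0) ≤ (M - m + 1) * (w - c0) := by nlinarith
          have e22 : (M - m + 1) * (w - c0) ≤ (M - m + 1) * (η / (2 * (M - m + 1))) :=
            mul_le_mul_of_nonneg_left hwle (by linarith)
          have e23 : (M - m + 1) * (η / (2 * (M - m + 1))) = η / 2 := by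
            field_simp
          linarith
        have e1 : ε' * (c0 - a) + ε' * (d - w) ≤ ε' * (d - a) := by nlinarith
        have e3 : (L + ε' / 2 - (L - ε' / 2)) * (d - w) = ε' * (d - w) := by ring
        linarith [e3.le, e3.ge]
      have : d ≤ c0 := le_csSup hSbdd hdS
      linarith
    have hbS : b ∈ S := hc0eq ▸ hc0S
    have := hbS.2 (ε / 2) (by linarith)
    apply Pt_mono this
    have hba : b - a ≠ 0 := sub_ne_zero.mpr hab.ne'
    have : ε' * (b - a) = ε / 2 := by
      rw [hε']
      field_simp
    linarith
  -- assemble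
  have hPt : ∀ ε > 0, ∃ L ∈ lowerSums f a b, ∃ U ∈ upperSums f a b, U - L ≤ ε := by
    intro ε hε
    obtain ⟨n, x, p, q, hx0, hxn, hm, hpq, hs⟩ := hkey ε hε
    refine ⟨∑ i ∈ Finset.range n, p i * (x (i + 1) - x i),
      ⟨n, x, p, hx0, hxn, hm, fun i hi t ht => (hpq i hi t ht).1, rfl⟩,
      ∑ i ∈ Finset.range n, q i * (x (i + 1) - x i),
      ⟨n, x, q, hx0, hxn, hm, fun i hi t ht => (hpq i hi t ht).2, rfl⟩, ?_⟩
    have : ∑ i ∈ Finset.range n, q i * (x (i + 1) - x i)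
        - ∑ i ∈ Finset.range n, p i * (x (i + 1) - x i)
        = ∑ i ∈ Finset.range n, (q i - p i) * (x (i + 1) - x i) := by
      rw [← Finset.sum_sub_distrib]
      apply Finset.sum_congr rfl
      intros; ring
    linarith
  obtain ⟨L1, hL1, U1, hU1, _⟩ := hPt 1 one_pos
  have hne1 : (lowerSums f a b).Nonempty := ⟨L1, hL1⟩
  have hne2 : (upperSums f a b).Nonempty := ⟨U1, hU1⟩
  have hbdd1 : BddAbove (lowerSums f a b) := ⟨U1, fun L hL => lower_le_upper hab hL hU1⟩
  have hbdd2 : BddBelow (upperSums f a b) := ⟨L1, fun U hU => lower_le_upper hab hL1 hU⟩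
  apply le_antisymm
  · exact le_csInf hne2 (fun U hU => csSup_le hne1 (fun L hL => lower_le_upper hab hL hU))
  · apply le_of_forall_pos_le_add
    intro ε hε
    obtain ⟨L, hL, U, hU, hULε⟩ := hPt ε hε
    have i1 : upperDarboux f a b ≤ U := csInf_le hbdd2 hU
    have i2 : L ≤ lowerDarboux f a b := le_csSup hbdd1 hL
    linarith

lemma lowerSums_subset_neg (f : ℝ → ℝ) (a b : ℝ) :
    lowerSums f a b ⊆ lowerSums (fun t => f (-t)) (-b) (-a) := by
  rintro s ⟨n, x, p, hx0, hxn, hm, hp, rfl⟩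
  refine ⟨n, fun i => -x (n - i), fun i => p (n - 1 - i), by simp [hxn], by simp [hx0], ?_, ?_, ?_⟩
  · intro i hi
    dsimp only
    have h2 : n - 1 - i + 1 = n - i := by omega
    have h3 : n - (i + 1) = n - 1 - i := by omega
    have := hm (n - 1 - i) (by omega)
    rw [h2] at this
    rw [h3]
    linarith
  · intro i hi t ht
    dsimp only at ht ⊢
    have h2 : n - 1 - i + 1 = n - i := by omega
    have h3 : n - (i + 1) = n - 1 - i := by omega
    rw [h3] at ht
    have hmem : -t ∈ Set.Icc (x (n - 1 - i)) (x (n - 1 - i + 1)) := by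
      rw [h2]
      exact ⟨by linarith [ht.2], by linarith [ht.1]⟩
    have := hp (n - 1 - i) (by omega) (-t) hmem
    simpa using this
  · rw [← Finset.sum_range_reflect (fun j => p j * (x (j + 1) - x j)) n]
    apply Finset.sum_congr rfl
    intro i hi
    have hi' := Finset.mem_range.mp hi
    have h2 : n - 1 - i + 1 = n - i := by omega
    have h3 : n - (i + 1) = n - 1 - i := by omega
    dsimp only
    rw [h2, h3]
    ring

lemma upperSums_subset_neg (f : ℝ → ℝ) (a b : ℝ) :
    upperSums f a b ⊆ upperSums (fun t => f (-t)) (-b) (-a) := by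
  rintro s ⟨n, x, q, hx0, hxn, hm, hq, rfl⟩
  refine ⟨n, fun i => -x (n - i), fun i => q (n - 1 - i), by simp [hxn], by simp [hx0], ?_, ?_, ?_⟩
  · intro i hi
    dsimp only
    have h2 : n - 1 - i + 1 = n - i := by omega
    have h3 : n - (i + 1) = n - 1 - i := by omega
    have := hm (n - 1 - i) (by omega)
    rw [h2] at this
    rw [h3]
    linarith
  · intro i hi t ht
    dsimp only at ht ⊢
    have h2 : n - 1 - i + 1 = n - i := by omega
    have h3 : n - (i + 1) = n - 1 - i := by omega
    rw [h3] at ht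
    have hmem : -t ∈ Set.Icc (x (n - 1 - i)) (x (n - 1 - i + 1)) := by
      rw [h2]
      exact ⟨by linarith [ht.2], by linarith [ht.1]⟩
    have := hq (n - 1 - i) (by omega) (-t) hmem
    simpa using this
  · rw [← Finset.sum_range_reflect (fun j => q j * (x (j + 1) - x j)) n]
    apply Finset.sum_congr rfl
    intro i hi
    have hi' := Finset.mem_range.mp hi
    have h2 : n - 1 - i + 1 = n - i := by omega
    have h3 : n - (i + 1) = n - 1 - i := by omega
    dsimp only
    rw [h2, h3]
    ring

lemma lowerSums_neg_eq (f : ℝ → ℝ) (a b : ℝ) :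
    lowerSums (fun t => f (-t)) (-b) (-a) = lowerSums f a b := by
  apply Set.Subset.antisymm
  · intro s hs
    have := lowerSums_subset_neg (fun t => f (-t)) (-b) (-a) hs
    simpa using this
  · exact lowerSums_subset_neg f a b

lemma upperSums_neg_eq (f : ℝ → ℝ) (a b : ℝ) :
    upperSums (fun t => f (-t)) (-b) (-a) = upperSums f a b := by
  apply Set.Subset.antisymm
  · intro s hs
    have := upperSums_subset_neg (fun t => f (-t)) (-b) (-a) hs
    simpa using this
  · exact upperSums_subset_neg f a b

theorem stmt14 (J : Set ℝ) (hJ : J.OrdConnected) (f : ℝ → ℝ)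
    (hbd : BoundedOnCompacts J f)
    (hlim : (∀ x ∈ J, (∃ y ∈ J, x < y) → ∃ L : ℝ, Tendsto f (𝓝[>] x) (𝓝 L)) ∨
            (∀ x ∈ J, (∃ y ∈ J, y < x) → ∃ L : ℝ, Tendsto f (𝓝[<] x) (𝓝 L))) :
    DarbouxIntegrableOnCompacts J f := by
  rcases hlim with hlim | hlim
  · exact key J hJ f hbd hlim
  · set J' : Set ℝ := Neg.neg ⁻¹' J with hJ'def
    set g : ℝ → ℝ := fun t => f (-t) with hgdef
    have hJ' : J'.OrdConnected := by
      refine ⟨fun x hx y hy z hz => ?_⟩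
      exact hJ.out hy hx ⟨by simp only [Set.mem_Icc] at hz ⊢; linarith [hz.2],
        by simp only [Set.mem_Icc] at hz ⊢; linarith [hz.1]⟩
    have hbd' : BoundedOnCompacts J' g := by
      intro a ha b hb
      obtain ⟨p, q, h⟩ := hbd (-b) hb (-a) ha
      exact ⟨p, q, fun t ht => h (-t) ⟨by linarith [ht.2], by linarith [ht.1]⟩⟩
    have hlim' : ∀ x ∈ J', (∃ y ∈ J', x < y) → ∃ L : ℝ, Tendsto g (𝓝[>] x) (𝓝 L) := by
      intro x hx ⟨y, hy, hxy⟩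
      obtain ⟨L, hL⟩ := hlim (-x) hx ⟨-y, hy, by linarith⟩
      refine ⟨L, hL.comp ?_⟩
      apply tendsto_nhdsWithin_of_tendsto_nhds_of_eventually_within
      · exact (continuous_neg.tendsto x).mono_left nhdsWithin_le_nhds
      · exact eventually_mem_nhdsWithin.mono (fun t ht => by
          simp only [Set.mem_Ioi] at ht
          simp only [Set.mem_Iio]
          linarith)
    have hint := key J' hJ' g hbd' hlim'
    intro a ha b hb hab
    have h1 := hint (-b) (by simp only [hJ'def, Set.mem_preimage, neg_neg]; exact hb) (-a) (by simp only [hJ'def, Set.mem_preimage, neg_neg]; exact ha) (by linarith)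
    rw [lowerDarboux, upperDarboux, lowerSums_neg_eq, upperSums_neg_eq] at h1
    exact h1
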